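/- Let f : [0,1] → ℝ be Lipschitz continuous with constant L and suppose f(t) = 0 for every t outside a set S ⊆ [0,1] that is a union of at most k intervals with λ(S) ≤ ρ. Then for every integer N ≥ 1: |(1/N)·Σ_{i=1}^{N} f(i/N) − ∫_0^1 f(t) dt| ≤ L·(N·ρ + 2k)/N². -/

import Mathlib

open MeasureTheory Set

/-- Riemann-sum error bound for a Lipschitz function vanishing outside a
small union of intervals (mechanism behind `R⁺_{3,n}` and `β_n`). -/
theorem riemann_error_small_support
    (f : ℝ → ℝ) (L : NNReal) (hf : LipschitzOnWith L f (Icc 0 1))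
    (k : ℕ) (S : Set ℝ) (hS : S ⊆ Icc 0 1)
    (I : Fin k → Set ℝ) (hI : ∀ j, (I j).OrdConnected) (hSI : S = ⋃ j, I j)
    (ρ : ℝ) (hρ : (volume S).toReal ≤ ρ)
    (hvanish : ∀ x ∈ Icc (0:ℝ) 1, x ∉ S → f x = 0) :
    ∀ N : ℕ, 1 ≤ N →
      |(1 / (N:ℝ)) * ∑ i ∈ Finset.Icc 1 N, f ((i:ℝ) / (N:ℝ)) -
          ∫ x in Icc (0:ℝ) 1, f x| ≤
        (L:ℝ) * ((N:ℝ) * ρ + 2 * (k:ℝ)) / (N:ℝ)^2 := by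
  intro N hN
  classical
  have hN0 : (0:ℝ) < N := by exact_mod_cast hN
  set c : ℕ → ℝ := fun i => (i:ℝ)/N with hc
  set cell : ℕ → Set ℝ := fun i => Ioc (c i) (c (i+1)) with hcelldef
  have hcmono : ∀ {a b : ℕ}, a ≤ b → c a ≤ c b := by
    intro a b hab
    have : (a:ℝ) ≤ b := by exact_mod_cast hab
    simp only [hc]
    gcongr
  have hclt : ∀ i : ℕ, c i < c (i+1) := by
    intro i
    have : (i:ℝ) < ((i+1:ℕ):ℝ) := by push_cast; linarith
    simp only [hc]
    gcongr
  have hcellsub : ∀ i, i < N → cell i ⊆ Icc 0 1 := by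
    intro i hi
    refine (Ioc_subset_Icc_self).trans (Icc_subset_Icc ?_ ?_)
    · positivity
    · have : ((i:ℝ)+1) ≤ N := by exact_mod_cast hi
      simp only [hc]
      rw [div_le_one hN0]; push_cast; linarith
  have hvol : ∀ i : ℕ, volume (cell i) = ENNReal.ofReal (1/(N:ℝ)) := by
    intro i
    simp only [hcelldef]
    rw [Real.volume_Ioc]
    congr 1
    simp only [hc]
    push_cast
    field_simp
    ring
  have hcont : ContinuousOn f (Icc 0 1) := hf.continuousOn
  have hint : IntegrableOn f (Icc (0:ℝ) 1) := hcont.integrableOn_Icc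
  have hintcell : ∀ i, i < N → IntegrableOn f (cell i) := by
    intro i hi
    exact hint.mono_set (hcellsub i hi)
  -- split the integral
  have hsplit : ∫ x in Icc (0:ℝ) 1, f x = ∑ i ∈ Finset.range N, ∫ x in cell i, f x := by
    have hii : ∀ i, i < N → IntervalIntegrable f volume (c i) (c (i+1)) := by
      intro i hi
      rw [intervalIntegrable_iff_integrableOn_Ioc_of_le (hcmono (Nat.le_succ i))]
      exact hintcell i hi
    have hA := intervalIntegral.sum_integral_adjacent_intervals hii
    have h0 : c 0 = 0 := by simp [hc]
    have h1 : c N = 1 := by simp only [hc]; field_simp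
    rw [MeasureTheory.integral_Icc_eq_integral_Ioc]
    have hB : ∑ i ∈ Finset.range N, ∫ x in cell i, f x = ∫ x in Ioc (0:ℝ) 1, f x := by
      calc ∑ i ∈ Finset.range N, ∫ x in cell i, f x
          = ∑ i ∈ Finset.range N, ∫ x in c i..c (i+1), f x := by
            refine Finset.sum_congr rfl fun i _ => ?_
            rw [intervalIntegral.integral_of_le (hcmono (Nat.le_succ i))]
        _ = ∫ x in (c 0)..(c N), f x := hA
        _ = ∫ x in Ioc (0:ℝ) 1, f x := by
            rw [h0, h1, intervalIntegral.integral_of_le (by norm_num : (0:ℝ) ≤ 1)]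
    exact hB.symm
  -- reindex the sum
  have hsum : ∑ i ∈ Finset.Icc 1 N, f ((i:ℝ)/N) = ∑ i ∈ Finset.range N, f (c (i+1)) := by
    rw [← Finset.Ico_add_one_right_eq_Icc, Finset.sum_Ico_eq_sum_range]
    refine Finset.sum_congr rfl fun i _ => ?_
    show f _ = f (c (i+1))
    simp only [hc]
    congr 1
    push_cast
    ring
  -- the bad set
  set bad : Finset ℕ := (Finset.range N).filter (fun i => (cell i ∩ S).Nonempty) with hbad
  -- per-cell error bound
  have herr : ∀ i ∈ Finset.range N,
      |f (c (i+1)) * (1/(N:ℝ)) - ∫ x in cell i, f x| ≤ (L:ℝ)/(N:ℝ)^2 := by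
    intro i hi
    rw [Finset.mem_range] at hi
    have hcfin : volume (cell i) < ⊤ := by rw [hvol i]; exact ENNReal.ofReal_lt_top
    have hconstI : IntegrableOn (fun _ : ℝ => f (c (i+1))) (cell i) :=
      integrableOn_const hcfin.ne
    have hconst : f (c (i+1)) * (1/(N:ℝ)) = ∫ x in cell i, f (c (i+1)) := by
      rw [setIntegral_const, measureReal_def, hvol i, ENNReal.toReal_ofReal (by positivity), smul_eq_mul,
        mul_comm]
    rw [hconst, ← integral_sub hconstI (hintcell i hi)]
    have hsub : IntegrableOn (fun x => f (c (i+1)) - f x) (cell i) :=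
      hconstI.sub (hintcell i hi)
    have hbound : ∀ x ∈ cell i, ‖f (c (i+1)) - f x‖ ≤ (L:ℝ) * (1/(N:ℝ)) := by
      intro x hx
      have hx01 : x ∈ Icc (0:ℝ) 1 := hcellsub i hi hx
      have hc01 : c (i+1) ∈ Icc (0:ℝ) 1 := hcellsub i hi (right_mem_Ioc.mpr (hclt i))
      have hdist : dist (f (c (i+1))) (f x) ≤ (L:ℝ) * dist (c (i+1)) x :=
        hf.dist_le_mul _ hc01 _ hx01
      have hd : dist (c (i+1)) x ≤ 1/(N:ℝ) := by
        rw [Real.dist_eq, abs_le]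
        have h1 : c i < x := hx.1
        have h2 : x ≤ c (i+1) := hx.2
        have h3 : c (i+1) - c i = 1/(N:ℝ) := by
          simp only [hc]; push_cast; field_simp; ring
        constructor <;> [linarith; linarith]
      calc ‖f (c (i+1)) - f x‖ = dist (f (c (i+1))) (f x) := by rw [Real.dist_eq]; rfl
        _ ≤ (L:ℝ) * dist (c (i+1)) x := hdist
        _ ≤ (L:ℝ) * (1/(N:ℝ)) := by
            exact mul_le_mul_of_nonneg_left hd L.coe_nonneg
    calc |∫ x in cell i, (f (c (i+1)) - f x)|
        ≤ ((L:ℝ) * (1/(N:ℝ))) * (volume (cell i)).toReal :=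
          norm_setIntegral_le_of_norm_le_const hcfin hbound
      _ = (L:ℝ)/(N:ℝ)^2 := by
          rw [hvol i, ENNReal.toReal_ofReal (by positivity)]
          rw [pow_two]
          field_simp
  -- good cells contribute zero
  have hgood : ∀ i ∈ Finset.range N, i ∉ bad →
      f (c (i+1)) * (1/(N:ℝ)) - ∫ x in cell i, f x = 0 := by
    intro i hi hnb
    have hiN : i < N := Finset.mem_range.mp hi
    have hne : ¬ (cell i ∩ S).Nonempty := by
      intro h
      exact hnb (Finset.mem_filter.mpr ⟨hi, h⟩)
    have hf0 : ∀ x ∈ cell i, f x = 0 := by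
      intro x hx
      exact hvanish x (hcellsub i hiN hx) (fun hxS => hne ⟨x, hx, hxS⟩)
    have h1 : f (c (i+1)) = 0 := hf0 _ (right_mem_Ioc.mpr (hclt i))
    have h2 : (∫ x in cell i, f x) = 0 := by
      calc (∫ x in cell i, f x) = ∫ _x in cell i, (0:ℝ) :=
            setIntegral_congr_fun measurableSet_Ioc hf0
        _ = 0 := by simp
    rw [h1, h2]
    ring
  -- cardinality bound
  have hcard : (bad.card : ℝ) ≤ (N:ℝ) * ρ + 2 * k := by
    set inn : Finset ℕ := (Finset.range N).filter (fun i => cell i ⊆ S) with hinn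
    set tJ : Fin k → Finset ℕ := fun j =>
      (Finset.range N).filter (fun i => (cell i ∩ I j).Nonempty ∧ ¬ cell i ⊆ I j) with htJ
    have hmid : ∀ (j : Fin k) (a b i : ℕ), (cell a ∩ I j).Nonempty →
        (cell b ∩ I j).Nonempty → a < i → i < b → cell i ⊆ I j := by
      rintro j a b i ⟨x, hxa, hxI⟩ ⟨y, hyb, hyI⟩ hai hib z hz
      refine (hI j).out hxI hyI ⟨?_, ?_⟩
      · exact le_trans (le_trans hxa.2 (hcmono hai)) (le_of_lt hz.1)
      · exact le_trans (le_trans hz.2 (hcmono hib)) (le_of_lt hyb.1)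
    have htJcard : ∀ j, (tJ j).card ≤ 2 := by
      intro j
      by_cases hne : (tJ j).Nonempty
      · have hsub : tJ j ⊆ {(tJ j).min' hne, (tJ j).max' hne} := by
          intro i hi
          by_contra hns
          simp only [Finset.mem_insert, Finset.mem_singleton] at hns
          push_neg at hns
          have hmin : (tJ j).min' hne < i :=
            lt_of_le_of_ne ((tJ j).min'_le i hi) (Ne.symm hns.1)
          have hmax : i < (tJ j).max' hne :=
            lt_of_le_of_ne ((tJ j).le_max' i hi) hns.2
          have h1 := (Finset.mem_filter.mp ((tJ j).min'_mem hne)).2.1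
          have h2 := (Finset.mem_filter.mp ((tJ j).max'_mem hne)).2.1
          have h3 := (Finset.mem_filter.mp hi).2.2
          exact h3 (hmid j _ _ i h1 h2 hmin hmax)
        calc (tJ j).card ≤ ({(tJ j).min' hne, (tJ j).max' hne} : Finset ℕ).card :=
              Finset.card_le_card hsub
          _ ≤ 2 := (Finset.card_insert_le _ _).trans (by simp)
      · simp [Finset.not_nonempty_iff_eq_empty.mp hne]
    have hsubbad : bad ⊆ inn ∪ Finset.univ.biUnion (fun j => tJ j) := by
      intro i hi
      rw [hbad, Finset.mem_filter] at hi
      obtain ⟨hiN, x, hxc, hxS⟩ := hi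
      by_cases hsub : cell i ⊆ S
      · exact Finset.mem_union_left _ (Finset.mem_filter.mpr ⟨hiN, hsub⟩)
      · have hxS' : x ∈ ⋃ j, I j := by rw [← hSI]; exact hxS
        obtain ⟨j, hj⟩ := mem_iUnion.mp hxS'
        refine Finset.mem_union_right _ (Finset.mem_biUnion.mpr ⟨j, Finset.mem_univ j, ?_⟩)
        refine Finset.mem_filter.mpr ⟨hiN, ⟨x, hxc, hj⟩, ?_⟩
        intro hcI
        refine hsub (fun z hz => ?_)
        rw [hSI]
        exact mem_iUnion.mpr ⟨j, hcI hz⟩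
    have hdisj : (inn : Set ℕ).PairwiseDisjoint cell := by
      intro a ha b hb hab
      rcases hab.lt_or_gt with h | h
      · simp only [hcelldef]
        exact Set.Ioc_disjoint_Ioc.mpr
          ((min_le_left _ _).trans ((hcmono h).trans (le_max_right _ _)))
      · simp only [hcelldef]
        exact Set.Ioc_disjoint_Ioc.mpr
          ((min_le_right _ _).trans ((hcmono h).trans (le_max_left _ _)))
    have hm : volume (⋃ i ∈ inn, cell i) = inn.card * ENNReal.ofReal (1/(N:ℝ)) := by
      rw [measure_biUnion_finset hdisj (fun i _ => measurableSet_Ioc)]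
      rw [Finset.sum_congr rfl (fun i _ => hvol i), Finset.sum_const, nsmul_eq_mul]
    have hle : volume (⋃ i ∈ inn, cell i) ≤ volume S := by
      refine measure_mono ?_
      intro z hz
      obtain ⟨i, hi, hzi⟩ := mem_iUnion₂.mp hz
      exact (Finset.mem_filter.mp hi).2 hzi
    have hSfin : volume S ≠ ⊤ := by
      refine ne_top_of_le_ne_top ?_ (measure_mono hS)
      simp [Real.volume_Icc]
    have hinnR : (inn.card : ℝ) * (1/(N:ℝ)) ≤ ρ := by
      have h1 : (inn.card : ENNReal) * ENNReal.ofReal (1/(N:ℝ)) ≤ volume S := hm ▸ hle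
      have h2 := ENNReal.toReal_mono hSfin h1
      rw [ENNReal.toReal_mul, ENNReal.toReal_natCast,
        ENNReal.toReal_ofReal (by positivity)] at h2
      exact h2.trans hρ
    have hinncard : (inn.card : ℝ) ≤ (N:ℝ) * ρ := by
      rw [mul_one_div, div_le_iff₀ hN0] at hinnR
      linarith
    have h1 : bad.card ≤ inn.card + 2 * k := by
      calc bad.card ≤ (inn ∪ Finset.univ.biUnion (fun j => tJ j)).card :=
            Finset.card_le_card hsubbad
        _ ≤ inn.card + (Finset.univ.biUnion (fun j => tJ j)).card :=
            Finset.card_union_le _ _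
        _ ≤ inn.card + ∑ j : Fin k, (tJ j).card := by
            gcongr
            exact Finset.card_biUnion_le
        _ ≤ inn.card + ∑ _j : Fin k, 2 := by
            gcongr with j
            exact htJcard j
        _ = inn.card + 2 * k := by
            simp [Finset.sum_const, Finset.card_univ, mul_comm]
    calc (bad.card : ℝ) ≤ (inn.card : ℝ) + 2 * k := by exact_mod_cast h1
      _ ≤ (N:ℝ) * ρ + 2 * k := by linarith
  -- put it together
  have key : |(1 / (N:ℝ)) * ∑ i ∈ Finset.Icc 1 N, f ((i:ℝ) / (N:ℝ)) -
      ∫ x in Icc (0:ℝ) 1, f x| ≤ bad.card * ((L:ℝ)/(N:ℝ)^2) := by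
    rw [hsplit, hsum, Finset.mul_sum, ← Finset.sum_sub_distrib]
    calc |∑ i ∈ Finset.range N, ((1/(N:ℝ)) * f (c (i+1)) - ∫ x in cell i, f x)|
        ≤ ∑ i ∈ Finset.range N, |(1/(N:ℝ)) * f (c (i+1)) - ∫ x in cell i, f x| :=
          Finset.abs_sum_le_sum_abs _ _
      _ = ∑ i ∈ bad, |(1/(N:ℝ)) * f (c (i+1)) - ∫ x in cell i, f x| := by
          refine (Finset.sum_subset (Finset.filter_subset _ _) ?_).symm
          intro i hi hnb
          rw [abs_eq_zero, mul_comm]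
          exact hgood i hi hnb
      _ ≤ ∑ i ∈ bad, (L:ℝ)/(N:ℝ)^2 := by
          refine Finset.sum_le_sum ?_
          intro i hi
          have him : i ∈ Finset.range N := Finset.mem_of_mem_filter i (hbad ▸ hi)
          rw [mul_comm]
          exact herr i him
      _ = bad.card * ((L:ℝ)/(N:ℝ)^2) := by rw [Finset.sum_const, nsmul_eq_mul]
  refine key.trans ?_
  have h2 : (bad.card : ℝ) * ((L:ℝ)/(N:ℝ)^2) ≤ ((N:ℝ)*ρ + 2*k) * ((L:ℝ)/(N:ℝ)^2) :=
    mul_le_mul_of_nonneg_right hcard (by positivity)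
  refine h2.trans (le_of_eq ?_)
  ring
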